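/- Fix θ ∈ (0,1). The maximum of s(p,q) := ((1+q)H(p) + p·H(q))/(1+p+q) over pairs (p,q) ∈ (0,1)² subject to the constraint θ = 2p(1−q)/(1+p+q) is achieved at the point satisfying p²q = (1−p)³, and the maximal value equals f(θ) = −log₂(1−p) − (θ/2)·log₂[((1−q)(1−p))/(q·p)] evaluated at that point. -/

import Mathlib

open Filter MeasureTheory Real Set

noncomputable section

/-- `Σ₂ = {0,1}^ℕ`: the space of 0-1 sequences `(x_k)_{k ≥ 1}`, where the entry `x_k`
(for `k ≥ 1`) is represented by `x (k-1) : Bool`. -/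
abbrev Sigma2 : Type := ℕ → Bool

/-- The metric `ρ((x_k),(y_k)) = 2^{-min{n : x_n ≠ y_n}}` (up to the indexing convention
`dist x y = (1/2)^{first index where x,y differ}`). -/
noncomputable instance : MetricSpace Sigma2 :=
  PiNat.metricSpaceOfDiscreteUniformity fun _ => rfl

/-- The digit `x_k ∈ {0,1}` (for `k ≥ 1`) of a sequence, as a real number. -/
def xval (x : Sigma2) (k : ℕ) : ℝ := if x (k - 1) then 1 else 0

/-- `A_θ = {(x_k) ∈ Σ₂ : lim_{n→∞} (1/n) ∑_{k=1}^n x_k x_{2k} = θ}`. -/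
def Aset (θ : ℝ) : Set Sigma2 :=
  {x | Tendsto (fun n : ℕ => (∑ k ∈ Finset.Icc 1 n, xval x k * xval x (2 * k)) / (n : ℝ))
    atTop (nhds θ)}

/-- The cylinder set `[u]` of sequences starting with the finite word `u`
(a list `u` represents the word `u_1 … u_n` with `u_k = u.getD (k-1) false`). -/
def cylinder (u : List Bool) : Set Sigma2 :=
  {x | ∀ i < u.length, x i = u.getD i false}

/-- Initial distribution: `π(0) = 1 - p`, `π(1) = p`. -/
def initProb (p : ℝ) (b : Bool) : ℝ := if b then p else 1 - p

/-- Transition probabilities: `P(0,0) = 1-p`, `P(0,1) = p`, `P(1,0) = q`, `P(1,1) = 1-q`. -/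
def transProb (p q : ℝ) (a b : Bool) : ℝ :=
  if a then (if b then 1 - q else q) else (if b then p else 1 - p)

/-- Markov weight `μ[w] = π(w_1) ∏_{j=1}^{m-1} P(w_j, w_{j+1})` of a finite word `w`. -/
def mweight (p q : ℝ) (w : List Bool) : ℝ :=
  if w = [] then 1
  else initProb p (w.getD 0 false) *
    ∏ j ∈ Finset.range (w.length - 1), transProb p q (w.getD j false) (w.getD (j + 1) false)

/-- The subword `u|_{J(i)} = (u_i, u_{2i}, u_{4i}, …)` of a finite word `u` along the
geometric progression `J(i) = {2^r i : r ≥ 0}`, keeping the indices `2^r i ≤ |u|`. -/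
def subword (u : List Bool) (i : ℕ) : List Bool :=
  ((List.range (u.length + 1)).filter (fun r => 2 ^ r * i ≤ u.length)).map
    (fun r => u.getD (2 ^ r * i - 1) false)

/-- `ℙ_μ[u] = ∏_{i ≤ n, i odd} μ[u|_{J(i)}]` for a finite word `u` of length `n`. -/
def PmuWord (p q : ℝ) (u : List Bool) : ℝ :=
  ∏ i ∈ (Finset.Icc 1 u.length).filter (fun i => Odd i), mweight p q (subword u i)

/-- `Pm` is the (probability) measure `ℙ_μ` on `Σ₂` determined by its values
`ℙ_μ[u] = ∏_{i odd} μ[u|_{J(i)}]` on cylinder sets. -/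
def IsPmu (p q : ℝ) (Pm : Measure Sigma2) : Prop :=
  IsProbabilityMeasure Pm ∧
    ∀ u : List Bool, Pm (cylinder u) = ENNReal.ofReal (PmuWord p q u)

/-- The initial word `x_1^n = x_1 … x_n` of a sequence. -/
def word (x : Sigma2) (n : ℕ) : List Bool := (List.range n).map x

/-- `N_1(x_m^n) = #{k ∈ [m,n] : x_k = 1}`. -/
def N1 (x : Sigma2) (m n : ℕ) : ℕ :=
  ((Finset.Icc m n).filter (fun k => x (k - 1) = true)).card

/-- `N_{ij}(x_1^m) = #{k ≤ m : x_k = i, x_{2k} = j}` (digits `i, j` as booleans). -/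
def Nij (x : Sigma2) (i j : Bool) (m : ℕ) : ℕ :=
  ((Finset.Icc 1 m).filter (fun k => x (k - 1) = i ∧ x (2 * k - 1) = j)).card

/-- `N_{1,odd}(x_1^n) = #{k ≤ n : k odd, x_k = 1}`. -/
def N1odd (x : Sigma2) (n : ℕ) : ℕ :=
  ((Finset.Icc 1 n).filter (fun k => Odd k ∧ x (k - 1) = true)).card

/-- The binary entropy function `H(t) = -t log₂ t - (1-t) log₂ (1-t)`. -/
def Hent (t : ℝ) : ℝ := -(t * Real.logb 2 t) - (1 - t) * Real.logb 2 (1 - t)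


lemma gibbs_aux {x a : ℝ} (hx : x ∈ Set.Ioo (0:ℝ) 1) (ha : a ∈ Set.Ioo (0:ℝ) 1) :
    Hent x ≤ -(x * Real.logb 2 a) - (1 - x) * Real.logb 2 (1 - a) := by
  obtain ⟨hx0, hx1⟩ := hx
  obtain ⟨ha0, ha1⟩ := ha
  have hx1' : (0:ℝ) < 1 - x := by linarith
  have ha1' : (0:ℝ) < 1 - a := by linarith
  have h1 : Real.log a - Real.log x ≤ a / x - 1 := by
    have := Real.log_le_sub_one_of_pos (div_pos ha0 hx0)
    rwa [Real.log_div ha0.ne' hx0.ne'] at this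
  have h2 : Real.log (1 - a) - Real.log (1 - x) ≤ (1 - a) / (1 - x) - 1 := by
    have := Real.log_le_sub_one_of_pos (div_pos ha1' hx1')
    rwa [Real.log_div ha1'.ne' hx1'.ne'] at this
  have h1' : x * (Real.log a - Real.log x) ≤ a - x := by
    have := mul_le_mul_of_nonneg_left h1 hx0.le
    have e : x * (a / x - 1) = a - x := by field_simp
    linarith [e ▸ this]
  have h2' : (1 - x) * (Real.log (1 - a) - Real.log (1 - x)) ≤ x - a := by
    have := mul_le_mul_of_nonneg_left h2 hx1'.le
    have e : (1 - x) * ((1 - a) / (1 - x) - 1) = x - a := by field_simp; ring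
    linarith [e ▸ this]
  have hineq : x * Real.log a + (1 - x) * Real.log (1 - a) ≤
      x * Real.log x + (1 - x) * Real.log (1 - x) := by nlinarith
  have hl2 : (0:ℝ) < (Real.log 2)⁻¹ :=
    inv_pos.mpr (Real.log_pos (by norm_num))
  have := mul_le_mul_of_nonneg_right hineq hl2.le
  unfold Hent Real.logb
  ring_nf
  ring_nf at this
  linarith

/-- Lemma 2.2(iii): for fixed `θ ∈ (0,1)`, the maximum of `s(p,q)` over `(p,q) ∈ (0,1)²`
subject to `θ = 2p(1-q)/(1+p+q)` is achieved at the point with `p²q = (1-p)³`, and equals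
`f(θ) = -log₂(1-p) - (θ/2) log₂[((1-q)(1-p))/(qp)]`. -/
theorem s_constrained_max (θ : ℝ) (hθ : θ ∈ Set.Ioo (0 : ℝ) 1) (p q : ℝ)
    (hp : p ∈ Set.Ioo (0 : ℝ) 1) (hq : q ∈ Set.Ioo (0 : ℝ) 1)
    (hpq : p ^ 2 * q = (1 - p) ^ 3) (hth : θ = 2 * p * (1 - q) / (1 + p + q)) :
    (∀ p' q' : ℝ, p' ∈ Set.Ioo (0 : ℝ) 1 → q' ∈ Set.Ioo (0 : ℝ) 1 →
        θ = 2 * p' * (1 - q') / (1 + p' + q') →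
        ((1 + q') * Hent p' + p' * Hent q') / (1 + p' + q') ≤
          ((1 + q) * Hent p + p * Hent q) / (1 + p + q)) ∧
    ((1 + q) * Hent p + p * Hent q) / (1 + p + q) =
      -Real.logb 2 (1 - p) - θ / 2 * Real.logb 2 ((1 - q) * (1 - p) / (q * p)) := by
  obtain ⟨hp0, hp1⟩ := hp
  obtain ⟨hq0, hq1⟩ := hq
  have hp1' : (0:ℝ) < 1 - p := by linarith
  have hq1' : (0:ℝ) < 1 - q := by linarith
  have hsum : (0:ℝ) < 1 + p + q := by linarith
  set Lp := Real.logb 2 p with hLp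
  set Lq := Real.logb 2 q with hLq
  set L1p := Real.logb 2 (1 - p) with hL1p
  set L1q := Real.logb 2 (1 - q) with hL1q
  have key : 2 * Lp + Lq = 3 * L1p := by
    have h := congrArg (Real.logb 2) hpq
    rw [Real.logb_mul (pow_ne_zero 2 hp0.ne') hq0.ne', Real.logb_pow, Real.logb_pow] at h
    push_cast at h
    linarith
  have hC : Real.logb 2 ((1 - q) * (1 - p) / (q * p)) = L1q + L1p - Lq - Lp := by
    rw [Real.logb_div (by positivity) (by positivity),
      Real.logb_mul hq1'.ne' hp1'.ne', Real.logb_mul hq0.ne' hp0.ne']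
    ring
  have heq : ((1 + q) * Hent p + p * Hent q) / (1 + p + q) =
      -L1p - θ / 2 * Real.logb 2 ((1 - q) * (1 - p) / (q * p)) := by
    rw [hC, hth]
    unfold Hent
    rw [← hLp, ← hLq, ← hL1p, ← hL1q]
    field_simp
    ring_nf
    nlinarith [key, sq_nonneg (1 + p + q)]
  refine ⟨?_, heq⟩
  intro p' q' hp' hq' hth'
  obtain ⟨hp0', hp1'⟩ := hp'
  obtain ⟨hq0', hq1'⟩ := hq'
  have hsum' : (0:ℝ) < 1 + p' + q' := by linarith
  have g1 : Hent p' ≤ -(p' * Lp) - (1 - p') * L1p :=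
    gibbs_aux ⟨hp0', hp1'⟩ ⟨hp0, hp1⟩
  have g2 : Hent q' ≤ -(q' * Lq) - (1 - q') * L1q :=
    gibbs_aux ⟨hq0', hq1'⟩ ⟨hq0, hq1⟩
  have hup : (1 + q') * Hent p' + p' * Hent q' ≤
      (1 + p' + q') * (-L1p) - p' * (1 - q') * (L1q + L1p - Lq - Lp) := by
    have b1 : (1 + q') * Hent p' ≤ (1 + q') * (-(p' * Lp) - (1 - p') * L1p) :=
      mul_le_mul_of_nonneg_left g1 (by linarith)
    have b2 : p' * Hent q' ≤ p' * (-(q' * Lq) - (1 - q') * L1q) :=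
      mul_le_mul_of_nonneg_left g2 hp0'.le
    have hid : (1 + q') * (-(p' * Lp) - (1 - p') * L1p) + p' * (-(q' * Lq) - (1 - q') * L1q)
        = (1 + p' + q') * (-L1p) - p' * (1 - q') * (L1q + L1p - Lq - Lp) := by
      linear_combination (-p') * key
    linarith
  rw [heq, hC]
  calc ((1 + q') * Hent p' + p' * Hent q') / (1 + p' + q')
      ≤ ((1 + p' + q') * (-L1p) - p' * (1 - q') * (L1q + L1p - Lq - Lp)) / (1 + p' + q') := by
        gcongr
    _ = -L1p - θ / 2 * (L1q + L1p - Lq - Lp) := by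
        rw [hth']
        field_simp
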